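/- arXiv:math/0504030 — 2 statements merged into one kernel-verified Lean document; each statement's English description precedes it below -/
import Mathlib

section
/- Fix integers N ≥ 1, M ≥ 0, n ≥ 1, and set L = 2^{Nd}. Define h_k as the indicator of the union over j ∈ {0,…,2^{k-N}-1}^d of cubes ∏_i [j_i 2^{-k+N}, j_i 2^{-k+N}+2^{-k-M}] for N ≤ k ≤ L. Then ∑_{N ≤ k_1 ≤ k_2 ≤ … ≤ k_n ≤ L} ∫ ∏_{i=1}^n h_{k_i}(x) dx ≤ C(n, d, M), where C(n,d,M) is independent of N. -/
open MeasureTheory Finset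

/-- The support of `h_k`: union over `j ∈ {0,…,2^{k-N}-1}^d` of the cubes
`∏_i [j_i 2^{-k+N}, j_i 2^{-k+N} + 2^{-k-M}]`. -/
def cubeUnion (d N M k : ℕ) : Set (EuclideanSpace ℝ (Fin d)) :=
  ⋃ (j : Fin d → ℕ) (_ : ∀ i, j i < 2 ^ (k - N)),
    (WithLp.ofLp : EuclideanSpace ℝ (Fin d) → (Fin d → ℝ)) ⁻¹' Set.univ.pi fun i =>
      Set.Icc ((j i : ℝ) * (2 : ℝ) ^ ((N : ℤ) - (k : ℤ)))
        ((j i : ℝ) * (2 : ℝ) ^ ((N : ℤ) - (k : ℤ)) + (2 : ℝ) ^ (-(k : ℤ) - (M : ℤ)))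

open scoped ENNReal

noncomputable section


def S1 (N M k : ℕ) : Set ℝ :=
  ⋃ j ∈ Finset.range (2 ^ (k - N)),
    Set.Icc ((j : ℝ) * (2:ℝ) ^ ((N:ℤ) - k)) ((j : ℝ) * (2:ℝ) ^ ((N:ℤ) - k) + (2:ℝ) ^ (-(k:ℤ) - M))

lemma S1_measurable (N M k : ℕ) : MeasurableSet (S1 N M k) :=
  (Finset.range (2 ^ (k - N))).measurableSet_biUnion (fun _ _ => measurableSet_Icc)

lemma S1_subset (N M k : ℕ) (hk : N ≤ k) : S1 N M k ⊆ Set.Icc (0:ℝ) 1 := by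
  intro x hx
  simp only [S1, Set.mem_iUnion, Finset.mem_range, Set.mem_Icc] at hx
  obtain ⟨j, hj, h1, h2⟩ := hx
  have hs : (0:ℝ) < (2:ℝ) ^ ((N:ℤ) - k) := by positivity
  constructor
  · have : (0:ℝ) ≤ (j:ℝ) * (2:ℝ) ^ ((N:ℤ) - k) := by positivity
    linarith
  · have hjle : (j:ℝ) ≤ (2:ℝ) ^ ((k:ℤ) - N) - 1 := by
      have : (j:ℝ) ≤ (2 ^ (k - N) : ℕ) - 1 := by
        have : (j:ℝ) + 1 ≤ ((2 ^ (k - N) : ℕ) : ℝ) := by exact_mod_cast hj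
        linarith
      have hcast : ((2 ^ (k - N) : ℕ) : ℝ) = (2:ℝ) ^ ((k:ℤ) - N) := by
        push_cast
        rw [← zpow_natCast]
        congr 1
        omega
      linarith [hcast ▸ this]
    have hmul : (j:ℝ) * (2:ℝ) ^ ((N:ℤ) - k) ≤ ((2:ℝ) ^ ((k:ℤ) - N) - 1) * (2:ℝ) ^ ((N:ℤ) - k) :=
      mul_le_mul_of_nonneg_right hjle hs.le
    have hprod : (2:ℝ) ^ ((k:ℤ) - N) * (2:ℝ) ^ ((N:ℤ) - k) = 1 := by
      rw [← zpow_add₀ (by norm_num : (2:ℝ) ≠ 0)]; norm_num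
    have hlen : (2:ℝ) ^ (-(k:ℤ) - M) ≤ (2:ℝ) ^ ((N:ℤ) - k) := by
      apply zpow_le_zpow_right₀ (by norm_num : (1:ℝ) ≤ 2)
      omega
    nlinarith

def B (N M : ℕ) : List ℕ → ℝ → ℝ
  | [], ℓ => ℓ
  | k :: ks, ℓ => (ℓ * (2:ℝ) ^ ((k:ℤ) - N) + 2) * B N M ks ((2:ℝ) ^ (-(k:ℤ) - M))

lemma B_nonneg (N M : ℕ) : ∀ (ks : List ℕ) (ℓ : ℝ), 0 ≤ ℓ → 0 ≤ B N M ks ℓ := by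
  intro ks
  induction ks with
  | nil => intro ℓ h; exact h
  | cons k ks ih =>
    intro ℓ h
    have h1 : (0:ℝ) ≤ ℓ * (2:ℝ) ^ ((k:ℤ) - N) + 2 := by positivity
    have h2 := ih ((2:ℝ) ^ (-(k:ℤ) - M)) (by positivity)
    exact mul_nonneg h1 h2

lemma key (N M : ℕ) : ∀ (ks : List ℕ) (a ℓ : ℝ), 0 ≤ ℓ →
    volume (Set.Icc a (a + ℓ) ∩ ⋂ k ∈ ks, S1 N M k) ≤ ENNReal.ofReal (B N M ks ℓ) := by
  intro ks
  induction ks with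
  | nil =>
    intro a ℓ hℓ
    simp only [List.not_mem_nil, Set.iInter_of_empty, Set.iInter_univ, Set.inter_univ, B]
    rw [Real.volume_Icc]
    simp
  | cons k ks ih =>
    intro a ℓ hℓ
    set s : ℝ := (2:ℝ) ^ ((N:ℤ) - k) with hs_def
    set len : ℝ := (2:ℝ) ^ (-(k:ℤ) - M) with hlen_def
    have hs : (0:ℝ) < s := by positivity
    have hlen0 : (0:ℝ) ≤ len := by positivity
    set J : Finset ℕ := (Finset.range (2 ^ (k - N))).filter
      (fun j => a ≤ (j:ℝ) * s + len ∧ (j:ℝ) * s ≤ a + ℓ) with hJ_def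
    -- covering
    have hco : (⋂ k' ∈ (k::ks), S1 N M k') = S1 N M k ∩ ⋂ k' ∈ ks, S1 N M k' := by
      ext x; simp [List.mem_cons, forall_eq_or_imp]
    have hcover : Set.Icc a (a + ℓ) ∩ ⋂ k' ∈ (k::ks), S1 N M k' ⊆
        ⋃ j ∈ J, (Set.Icc ((j:ℝ) * s) ((j:ℝ) * s + len) ∩ ⋂ k' ∈ ks, S1 N M k') := by
      rw [hco]
      rintro x ⟨hxI, hxS, hxR⟩
      simp only [S1, Set.mem_iUnion, Finset.mem_range] at hxS
      obtain ⟨j, hj, hxj⟩ := hxS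
      have hjJ : j ∈ J := by
        simp only [hJ_def, Finset.mem_filter, Finset.mem_range]
        obtain ⟨hx1, hx2⟩ := hxj
        obtain ⟨ha1, ha2⟩ := hxI
        exact ⟨hj, by linarith, by linarith⟩
      exact Set.mem_iUnion₂.2 ⟨j, hjJ, ⟨hxj, hxR⟩⟩
    -- cardinality bound
    have hcard : (J.card : ℝ) ≤ ℓ * (2:ℝ) ^ ((k:ℤ) - N) + 2 := by
      rcases J.eq_empty_or_nonempty with he | hne
      · rw [he]; simp; positivity
      · set j₀ := J.min' hne with hj0
        have hj₀J : j₀ ∈ J := J.min'_mem hne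
        have hj₀cond : a ≤ (j₀:ℝ) * s + len := by
          have := Finset.mem_filter.1 hj₀J; exact this.2.1
        set t : ℕ := ⌊(ℓ + len) / s⌋₊ with ht
        have hsub : J ⊆ Finset.Icc j₀ (j₀ + t) := by
          intro j hjJ
          have hmin : j₀ ≤ j := J.min'_le j hjJ
          have hcond : (j:ℝ) * s ≤ a + ℓ := (Finset.mem_filter.1 hjJ).2.2
          have hdiff : ((j - j₀ : ℕ) : ℝ) * s ≤ ℓ + len := by
            rw [Nat.cast_sub hmin]
            nlinarith
          have : ((j - j₀ : ℕ) : ℝ) ≤ (ℓ + len) / s := (le_div_iff₀ hs).2 hdiff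
          have : j - j₀ ≤ t := Nat.le_floor this
          exact Finset.mem_Icc.2 ⟨hmin, by omega⟩
        have hcardle : J.card ≤ t + 1 := by
          calc J.card ≤ (Finset.Icc j₀ (j₀ + t)).card := Finset.card_le_card hsub
          _ = t + 1 := by rw [Nat.card_Icc]; omega
        have htle : (t : ℝ) ≤ (ℓ + len) / s := Nat.floor_le (by positivity)
        have hdiv : (ℓ + len) / s = (ℓ + len) * (2:ℝ) ^ ((k:ℤ) - N) := by
          rw [div_eq_mul_inv, hs_def, ← zpow_neg]
          ring_nf
        have hlen2 : len * (2:ℝ) ^ ((k:ℤ) - N) ≤ 1 := by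
          rw [hlen_def, ← zpow_add₀ (by norm_num : (2:ℝ) ≠ 0)]
          have : (-(k:ℤ) - M) + ((k:ℤ) - N) = -(M:ℤ) - N := by ring
          rw [this]
          exact zpow_le_one_of_nonpos₀ (by norm_num) (by omega)
        have : (J.card : ℝ) ≤ (t:ℝ) + 1 := by exact_mod_cast hcardle
        rw [hdiv] at htle
        nlinarith [hs.le]
    -- combine
    calc volume (Set.Icc a (a + ℓ) ∩ ⋂ k' ∈ (k::ks), S1 N M k')
        ≤ volume (⋃ j ∈ J, (Set.Icc ((j:ℝ) * s) ((j:ℝ) * s + len) ∩ ⋂ k' ∈ ks, S1 N M k')) :=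
          measure_mono hcover
      _ ≤ ∑ j ∈ J, volume (Set.Icc ((j:ℝ) * s) ((j:ℝ) * s + len) ∩ ⋂ k' ∈ ks, S1 N M k') :=
          measure_biUnion_finset_le _ _
      _ ≤ ∑ j ∈ J, ENNReal.ofReal (B N M ks len) := by
          apply Finset.sum_le_sum
          intro j _
          exact ih ((j:ℝ) * s) len hlen0
      _ = (J.card : ℝ≥0∞) * ENNReal.ofReal (B N M ks len) := by
          rw [Finset.sum_const, nsmul_eq_mul]
      _ ≤ ENNReal.ofReal (ℓ * (2:ℝ) ^ ((k:ℤ) - N) + 2) * ENNReal.ofReal (B N M ks len) := by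
          apply mul_le_mul_left
          rw [← ENNReal.ofReal_natCast]
          exact ENNReal.ofReal_le_ofReal hcard
      _ = ENNReal.ofReal (B N M (k::ks) ℓ) := by
          rw [← ENNReal.ofReal_mul (by positivity)]
          rfl

def P (N M : ℕ) : ℕ → List ℕ → ℝ
  | _, [] => 1
  | p, k :: ks => 3 * ((2:ℝ) ^ ((p:ℤ) - k) + (2:ℝ) ^ (-(M:ℤ) - N)) * P N M k ks

lemma P_nonneg (N M : ℕ) : ∀ (ks : List ℕ) (p : ℕ), 0 ≤ P N M p ks := by
  intro ks
  induction ks with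
  | nil => intro p; norm_num [P]
  | cons k ks ih =>
    intro p
    have := ih k
    have h : (0:ℝ) ≤ 3 * ((2:ℝ) ^ ((p:ℤ) - k) + (2:ℝ) ^ (-(M:ℤ) - N)) := by positivity
    exact mul_nonneg h this

lemma B_le_P (N M : ℕ) : ∀ (ks : List ℕ) (p : ℕ), (∀ k ∈ ks, N ≤ k) →
    B N M ks ((2:ℝ) ^ (-(p:ℤ) - M)) ≤ (2:ℝ) ^ (-(p:ℤ) - M) * P N M p ks := by
  intro ks
  induction ks with
  | nil => intro p _; simp [B, P]
  | cons k ks ih =>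
    intro p hks
    have hkN : N ≤ k := hks k List.mem_cons_self
    have ihk := ih k (fun k' hk' => hks k' (List.mem_cons_of_mem k hk'))
    have hP := P_nonneg N M ks k
    show ((2:ℝ) ^ (-(p:ℤ) - M) * (2:ℝ) ^ ((k:ℤ) - N) + 2) * B N M ks ((2:ℝ) ^ (-(k:ℤ) - M)) ≤ _
    have hfac : (0:ℝ) ≤ (2:ℝ) ^ (-(p:ℤ) - M) * (2:ℝ) ^ ((k:ℤ) - N) + 2 := by positivity
    calc ((2:ℝ) ^ (-(p:ℤ) - M) * (2:ℝ) ^ ((k:ℤ) - N) + 2) * B N M ks ((2:ℝ) ^ (-(k:ℤ) - M))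
        ≤ ((2:ℝ) ^ (-(p:ℤ) - M) * (2:ℝ) ^ ((k:ℤ) - N) + 2) *
            ((2:ℝ) ^ (-(k:ℤ) - M) * P N M k ks) := by
          apply mul_le_mul_of_nonneg_left ihk hfac
      _ ≤ (2:ℝ) ^ (-(p:ℤ) - M) * (3 * ((2:ℝ) ^ ((p:ℤ) - k) + (2:ℝ) ^ (-(M:ℤ) - N)) * P N M k ks) := by
          rw [show (2:ℝ) ^ (-(p:ℤ) - M) * (3 * ((2:ℝ) ^ ((p:ℤ) - k) + (2:ℝ) ^ (-(M:ℤ) - N)) * P N M k ks)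
            = ((2:ℝ) ^ (-(p:ℤ) - M) * (3 * ((2:ℝ) ^ ((p:ℤ) - k) + (2:ℝ) ^ (-(M:ℤ) - N)))) * P N M k ks by ring]
          rw [show ((2:ℝ) ^ (-(p:ℤ) - M) * (2:ℝ) ^ ((k:ℤ) - N) + 2) *
            ((2:ℝ) ^ (-(k:ℤ) - M) * P N M k ks)
            = (((2:ℝ) ^ (-(p:ℤ) - M) * (2:ℝ) ^ ((k:ℤ) - N) + 2) * (2:ℝ) ^ (-(k:ℤ) - M)) * P N M k ks by ring]
          apply mul_le_mul_of_nonneg_right _ hP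
          -- core scalar inequality
          have e1 : (2:ℝ) ^ (-(p:ℤ) - M) * (2:ℝ) ^ ((k:ℤ) - N) * (2:ℝ) ^ (-(k:ℤ) - M)
              = (2:ℝ) ^ (-(p:ℤ) - M) * (2:ℝ) ^ (-(M:ℤ) - N) := by
            rw [← zpow_add₀ (by norm_num : (2:ℝ) ≠ 0), ← zpow_add₀ (by norm_num : (2:ℝ) ≠ 0),
              ← zpow_add₀ (by norm_num : (2:ℝ) ≠ 0)]
            congr 1; ring
          have e2 : (2:ℝ) ^ (-(p:ℤ) - M) * (2:ℝ) ^ ((p:ℤ) - k) = (2:ℝ) ^ (-(k:ℤ) - M) := by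
            rw [← zpow_add₀ (by norm_num : (2:ℝ) ≠ 0)]
            congr 1; ring
          have h3 : (0:ℝ) ≤ (2:ℝ) ^ (-(p:ℤ) - M) * (2:ℝ) ^ (-(M:ℤ) - N) := by positivity
          have h4 : (0:ℝ) ≤ (2:ℝ) ^ (-(k:ℤ) - M) := by positivity
          nlinarith [e1, e2]
      _ = (2:ℝ) ^ (-(p:ℤ) - M) * P N M p (k :: ks) := by rfl

lemma P_ofFn (N M : ℕ) : ∀ (m : ℕ) (f : Fin (m+1) → ℕ),
    P N M (f 0) (List.ofFn fun i : Fin m => f i.succ)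
      = ∏ i : Fin m, (3 * ((2:ℝ) ^ ((f i.castSucc : ℤ) - f i.succ) + (2:ℝ) ^ (-(M:ℤ) - N))) := by
  intro m
  induction m with
  | zero => intro f; simp [P]
  | succ m ih =>
    intro f
    rw [List.ofFn_succ]
    show P N M (f 0) (f (0:Fin (m+1)).succ :: List.ofFn fun i : Fin m => f i.succ.succ) = _
    rw [show P N M (f 0) (f (0:Fin (m+1)).succ :: List.ofFn fun i : Fin m => f i.succ.succ)
        = 3 * ((2:ℝ) ^ ((f 0 : ℤ) - f (0:Fin (m+1)).succ) + (2:ℝ) ^ (-(M:ℤ) - N)) *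
          P N M (f (0:Fin (m+1)).succ) (List.ofFn fun i : Fin m => f i.succ.succ) from rfl]
    have ihs := ih (fun i => f i.succ)
    rw [Fin.prod_univ_succ]
    congr 1

lemma cubeUnion_eq (d N M k : ℕ) :
    cubeUnion d N M k = (WithLp.ofLp : EuclideanSpace ℝ (Fin d) → (Fin d → ℝ)) ⁻¹' Set.univ.pi fun _ : Fin d => S1 N M k := by
  ext x
  constructor
  · intro hx
    rw [cubeUnion, Set.mem_iUnion] at hx
    obtain ⟨j, hx⟩ := hx
    rw [Set.mem_iUnion] at hx
    obtain ⟨hj, hx⟩ := hx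
    intro i _
    simp only [S1, Set.mem_iUnion, Finset.mem_range]
    exact ⟨j i, hj i, hx i (Set.mem_univ i)⟩
  · intro hx
    have h : ∀ i : Fin d, ∃ ji : ℕ, ji < 2 ^ (k - N) ∧
        x i ∈ Set.Icc ((ji : ℝ) * (2:ℝ) ^ ((N:ℤ) - k))
          ((ji : ℝ) * (2:ℝ) ^ ((N:ℤ) - k) + (2:ℝ) ^ (-(k:ℤ) - M)) := by
      intro i
      have := hx i (Set.mem_univ i)
      simpa only [S1, Set.mem_iUnion, Finset.mem_range, exists_prop] using this
    choose j hj hx2 using h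
    rw [cubeUnion, Set.mem_iUnion]
    exact ⟨j, Set.mem_iUnion.2 ⟨hj, fun i _ => hx2 i⟩⟩

lemma iInter_pi {n d : ℕ} (T : Fin n → Set ℝ) :
    (⋂ i : Fin n, Set.univ.pi fun _ : Fin d => T i)
      = Set.univ.pi fun _ : Fin d => ⋂ i, T i := by
  ext x
  simp only [Set.mem_iInter, Set.mem_pi, Set.mem_univ, true_implies]
  exact forall_comm

lemma vol_pi_const (d : ℕ) (T : Set ℝ) (hT : MeasurableSet T) :
    (volume : Measure (EuclideanSpace ℝ (Fin d))) ((WithLp.ofLp : EuclideanSpace ℝ (Fin d) → (Fin d → ℝ)) ⁻¹' Set.univ.pi fun _ : Fin d => T)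
      = volume T ^ d := by
  have h := PiLp.volume_preserving_ofLp (Fin d)
  rw [h.measure_preimage (MeasurableSet.univ_pi fun _ => hT).nullMeasurableSet]
  rw [volume_pi_pi]
  simp

lemma integral_prod_indicator {n d : ℕ} (A : Fin n → Set (EuclideanSpace ℝ (Fin d)))
    (hA : MeasurableSet (⋂ i, A i)) :
    (∫ x, ∏ i, (A i).indicator (fun _ => (1:ℝ)) x) = (volume (⋂ i, A i)).toReal := by
  have hpt : (fun x => ∏ i, (A i).indicator (fun _ => (1:ℝ)) x)
      = (⋂ i, A i).indicator (fun _ => (1:ℝ)) := by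
    funext x
    by_cases h : x ∈ ⋂ i, A i
    · rw [Set.indicator_of_mem h]
      exact Finset.prod_eq_one fun i _ =>
        Set.indicator_of_mem (Set.mem_iInter.1 h i) _
    · rw [Set.indicator_of_notMem h]
      obtain ⟨i, hi⟩ : ∃ i, x ∉ A i := by simpa [Set.mem_iInter] using h
      exact Finset.prod_eq_zero (Finset.mem_univ i) (Set.indicator_of_notMem hi _)
  rw [hpt]
  exact integral_indicator_one hA

lemma vol_inter_le (N M : ℕ) {n : ℕ} (k : Fin (n+1) → ℕ) (hkN : ∀ i, N ≤ k i) :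
    volume (⋂ i, S1 N M (k i)) ≤ ENNReal.ofReal (B N M (List.ofFn k) 1) := by
  have hmem : (⋂ k' ∈ List.ofFn k, S1 N M k') = ⋂ i, S1 N M (k i) := by
    ext x
    simp only [Set.mem_iInter, List.mem_ofFn]
    constructor
    · intro h i; exact h (k i) ⟨i, rfl⟩
    · rintro h k' ⟨i, rfl⟩; exact h i
  have hsub : (⋂ i, S1 N M (k i)) ⊆ Set.Icc (0:ℝ) (0+1) := by
    intro x hx
    have h1 := S1_subset N M (k 0) (hkN 0) (Set.mem_iInter.1 hx 0)
    simpa using h1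
  have h0 : (⋂ i, S1 N M (k i)) = Set.Icc (0:ℝ) (0+1) ∩ ⋂ k' ∈ List.ofFn k, S1 N M k' := by
    rw [hmem]
    exact (Set.inter_eq_self_of_subset_right hsub).symm
  rw [← hmem] at h0 ⊢
  rw [h0]
  exact key N M (List.ofFn k) 0 1 zero_le_one

lemma term_le (d N M : ℕ) {n : ℕ} (k : Fin (n+1) → ℕ) (hkN : ∀ i, N ≤ k i) :
    (∫ x : EuclideanSpace ℝ (Fin d), ∏ i, (cubeUnion d N M (k i)).indicator (fun _ => (1:ℝ)) x)
      ≤ (B N M (List.ofFn k) 1) ^ d := by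
  have hT : MeasurableSet (⋂ i, S1 N M (k i)) :=
    MeasurableSet.iInter fun i => S1_measurable N M (k i)
  have hEq : (⋂ i, cubeUnion d N M (k i))
      = (WithLp.ofLp : EuclideanSpace ℝ (Fin d) → (Fin d → ℝ)) ⁻¹' Set.univ.pi fun _ : Fin d => ⋂ i, S1 N M (k i) := by
    simp_rw [cubeUnion_eq]
    rw [← Set.preimage_iInter, iInter_pi]
  have hmeas : MeasurableSet (⋂ i, cubeUnion d N M (k i)) := by
    rw [hEq]; exact (MeasurableSet.univ_pi fun _ => hT).preimage (WithLp.measurable_ofLp _ _)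
  rw [integral_prod_indicator _ hmeas, hEq, vol_pi_const d _ hT, ENNReal.toReal_pow]
  have hB0 : 0 ≤ B N M (List.ofFn k) 1 := B_nonneg N M _ 1 zero_le_one
  apply pow_le_pow_left₀ ENNReal.toReal_nonneg
  exact ENNReal.toReal_le_of_le_ofReal hB0 (vol_inter_le N M k hkN)

lemma sum_geo_pow (K d : ℕ) (hd : 1 ≤ d) :
    ∑ s ∈ Finset.range K, ((2:ℝ) ^ (-(s:ℤ)))^d ≤ 2 := by
  have h1 : ∀ s : ℕ, ((2:ℝ) ^ (-(s:ℤ)))^d ≤ ((2:ℝ)⁻¹)^s := by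
    intro s
    have he : (2:ℝ) ^ (-(s:ℤ)) = ((2:ℝ)⁻¹)^s := by
      rw [zpow_neg, zpow_natCast, inv_pow]
    rw [he]
    apply pow_le_of_le_one (by positivity) _ (by omega)
    apply pow_le_one₀ (by norm_num) (by norm_num)
  calc ∑ s ∈ Finset.range K, ((2:ℝ) ^ (-(s:ℤ)))^d
      ≤ ∑ s ∈ Finset.range K, ((2:ℝ)⁻¹)^s := Finset.sum_le_sum fun s _ => h1 s
    _ ≤ 2 := by
        rw [geom_sum_eq (by norm_num : ((2:ℝ)⁻¹) ≠ 1) K]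
        rw [div_le_iff_of_neg (by norm_num : ((2:ℝ)⁻¹) - 1 < 0)]
        have h0 : (0:ℝ) ≤ ((2:ℝ)⁻¹)^K := by positivity
        nlinarith

lemma three_mul_pow_le (a b : ℝ) (ha : 0 ≤ a) (hb : 0 ≤ b) (d : ℕ) :
    ((3:ℝ)*(a+b))^d ≤ 6^d * (a^d + b^d) := by
  rcases le_total a b with h | h
  · have h1 : (3:ℝ)*(a+b) ≤ 6*b := by linarith
    calc ((3:ℝ)*(a+b))^d ≤ (6*b)^d := pow_le_pow_left₀ (by linarith) h1 d
      _ = 6^d * b^d := mul_pow 6 b d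
      _ ≤ 6^d * (a^d + b^d) := by
          have : (0:ℝ) ≤ a^d := by positivity
          have h6 : (0:ℝ) ≤ (6:ℝ)^d := by positivity
          nlinarith
  · have h1 : (3:ℝ)*(a+b) ≤ 6*a := by linarith
    calc ((3:ℝ)*(a+b))^d ≤ (6*a)^d := pow_le_pow_left₀ (by linarith) h1 d
      _ = 6^d * a^d := mul_pow 6 a d
      _ ≤ 6^d * (a^d + b^d) := by
          have : (0:ℝ) ≤ b^d := by positivity
          have h6 : (0:ℝ) ≤ (6:ℝ)^d := by positivity
          nlinarith

lemma zpow_cancel (N M d : ℕ) (hd : 1 ≤ d) :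
    (2:ℝ)^((N*d : ℕ) : ℤ) * ((2:ℝ)^(-(M:ℤ)-N))^d ≤ 1 := by
  rw [← zpow_natCast ((2:ℝ)^(-(M:ℤ)-N)) d, ← zpow_mul, ← zpow_add₀ (by norm_num : (2:ℝ) ≠ 0)]
  apply zpow_le_one_of_nonpos₀ (by norm_num)
  push_cast
  nlinarith [(Nat.cast_nonneg M : (0:ℝ) ≤ M), (Nat.cast_nonneg N : (0:ℝ) ≤ N),
    (Nat.cast_nonneg d : (0:ℝ) ≤ d)]

lemma sum_g_le (K d N M : ℕ) (hd : 1 ≤ d) (hK : (K:ℝ) ≤ 2 * (2:ℝ)^((N*d : ℕ):ℤ)) :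
    ∑ s ∈ Finset.range K, ((3:ℝ)*((2:ℝ)^(-(s:ℤ)) + (2:ℝ)^(-(M:ℤ)-N)))^d ≤ 4 * 6^d := by
  have h6 : (0:ℝ) ≤ (6:ℝ)^d := by positivity
  calc ∑ s ∈ Finset.range K, ((3:ℝ)*((2:ℝ)^(-(s:ℤ)) + (2:ℝ)^(-(M:ℤ)-N)))^d
      ≤ ∑ s ∈ Finset.range K, (6:ℝ)^d * (((2:ℝ)^(-(s:ℤ)))^d + ((2:ℝ)^(-(M:ℤ)-N))^d) :=
        Finset.sum_le_sum fun s _ => three_mul_pow_le _ _ (by positivity) (by positivity) d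
    _ = (6:ℝ)^d * ((∑ s ∈ Finset.range K, ((2:ℝ)^(-(s:ℤ)))^d)
          + K * ((2:ℝ)^(-(M:ℤ)-N))^d) := by
        rw [← Finset.mul_sum, Finset.sum_add_distrib, Finset.sum_const, Finset.card_range,
          nsmul_eq_mul]
    _ ≤ (6:ℝ)^d * (2 + 2) := by
        have hgeo := sum_geo_pow K d hd
        have hsec : (K:ℝ) * ((2:ℝ)^(-(M:ℤ)-N))^d ≤ 2 := by
          have hz := zpow_cancel N M d hd
          have hp : (0:ℝ) ≤ ((2:ℝ)^(-(M:ℤ)-N))^d := by positivity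
          calc (K:ℝ) * ((2:ℝ)^(-(M:ℤ)-N))^d
              ≤ 2 * (2:ℝ)^((N*d : ℕ):ℤ) * ((2:ℝ)^(-(M:ℤ)-N))^d :=
                mul_le_mul_of_nonneg_right hK hp
            _ = 2 * ((2:ℝ)^((N*d : ℕ):ℤ) * ((2:ℝ)^(-(M:ℤ)-N))^d) := by ring
            _ ≤ 2 * 1 := by nlinarith
            _ = 2 := by ring
        nlinarith
    _ = 4 * 6^d := by ring

lemma first_le (d N M L : ℕ) (hd : 1 ≤ d) (hL : L = 2^(N*d)) :
    ((L:ℝ) + 1) * ((3:ℝ) * (2:ℝ)^(-((N:ℤ)+M)))^d ≤ 2 * 3^d := by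
  have hcast : ((L:ℝ)+1) ≤ 2 * (2:ℝ)^((N*d:ℕ):ℤ) := by
    subst hL
    rw [zpow_natCast]
    push_cast
    have : (1:ℝ) ≤ (2:ℝ)^(N*d) := one_le_pow₀ (by norm_num)
    linarith
  have hexp : ((2:ℝ)^(-((N:ℤ)+M)))^d = ((2:ℝ)^(-(M:ℤ)-N))^d := by
    congr 2
    ring
  rw [mul_pow]
  have h3 : (0:ℝ) ≤ (3:ℝ)^d := by positivity
  have hz : (2:ℝ)^((N*d:ℕ):ℤ) * ((2:ℝ)^(-(M:ℤ)-N))^d ≤ 1 := zpow_cancel N M d hd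
  have hp : (0:ℝ) ≤ ((2:ℝ)^(-((N:ℤ)+M)))^d := by positivity
  calc ((L:ℝ) + 1) * ((3:ℝ)^d * ((2:ℝ)^(-((N:ℤ)+M)))^d)
      ≤ 2 * (2:ℝ)^((N*d:ℕ):ℤ) * ((3:ℝ)^d * ((2:ℝ)^(-((N:ℤ)+M)))^d) := by
        apply mul_le_mul_of_nonneg_right hcast (by positivity)
    _ = 2 * (3:ℝ)^d * ((2:ℝ)^((N*d:ℕ):ℤ) * ((2:ℝ)^(-(M:ℤ)-N))^d) := by
        rw [← hexp]; ring
    _ ≤ 2 * (3:ℝ)^d * 1 := by nlinarith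
    _ = 2 * 3^d := by ring

lemma B_cons (N M k : ℕ) (ks : List ℕ) (ℓ : ℝ) :
    B N M (k::ks) ℓ = (ℓ * (2:ℝ) ^ ((k:ℤ) - N) + 2) * B N M ks ((2:ℝ) ^ (-(k:ℤ) - M)) := rfl

lemma B_ofFn_le (N M : ℕ) {m : ℕ} (k : Fin (m+1) → ℕ) (hkN : ∀ i, N ≤ k i) :
    B N M (List.ofFn k) 1 ≤ 3 * (2:ℝ)^(-((N:ℤ)+(M:ℤ))) *
      ∏ j : Fin m, (3 * ((2:ℝ) ^ ((k j.castSucc : ℤ) - (k j.succ : ℤ)) + (2:ℝ) ^ (-(M:ℤ) - N))) := by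
  rw [List.ofFn_succ, B_cons]
  have h1 := B_le_P N M (List.ofFn fun i : Fin m => k i.succ) (k 0) (by
    intro k' hk'
    obtain ⟨i, hi⟩ := List.mem_ofFn.1 hk'
    exact hi ▸ hkN i.succ)
  have hP := P_nonneg N M (List.ofFn fun i : Fin m => k i.succ) (k 0)
  have hk0 : (0:ℤ) ≤ (k 0 : ℤ) - N := by
    have := hkN 0; omega
  have h2 : (1 * (2:ℝ)^((k 0 : ℤ) - N) + 2) ≤ 3 * (2:ℝ)^((k 0 : ℤ) - N) := by
    have : (1:ℝ) ≤ (2:ℝ)^((k 0 :ℤ) - N) := one_le_zpow₀ (by norm_num) hk0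
    linarith
  have hz : (0:ℝ) ≤ (2:ℝ)^(-(k 0 : ℤ) - M) * P N M (k 0) (List.ofFn fun i : Fin m => k i.succ) :=
    mul_nonneg (by positivity) hP
  calc (1 * (2:ℝ)^((k 0 : ℤ) - (N:ℤ)) + 2) *
        B N M (List.ofFn fun i : Fin m => k i.succ) ((2:ℝ)^(-(k 0 : ℤ) - M))
      ≤ (1 * (2:ℝ)^((k 0 : ℤ) - N) + 2) *
        ((2:ℝ)^(-(k 0 : ℤ) - M) * P N M (k 0) (List.ofFn fun i : Fin m => k i.succ)) := by
        apply mul_le_mul_of_nonneg_left h1 (by positivity)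
    _ ≤ (3 * (2:ℝ)^((k 0 : ℤ) - N)) *
        ((2:ℝ)^(-(k 0 : ℤ) - M) * P N M (k 0) (List.ofFn fun i : Fin m => k i.succ)) :=
        mul_le_mul_of_nonneg_right h2 hz
    _ = 3 * (2:ℝ)^(-((N:ℤ)+(M:ℤ))) * P N M (k 0) (List.ofFn fun i : Fin m => k i.succ) := by
        rw [show (3 * (2:ℝ)^((k 0 : ℤ) - N)) *
            ((2:ℝ)^(-(k 0 : ℤ) - M) * P N M (k 0) (List.ofFn fun i : Fin m => k i.succ))
            = 3 * ((2:ℝ)^((k 0 : ℤ) - N) * (2:ℝ)^(-(k 0 : ℤ) - M)) *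
              P N M (k 0) (List.ofFn fun i : Fin m => k i.succ) by ring]
        congr 2
        rw [← zpow_add₀ (by norm_num : (2:ℝ) ≠ 0)]
        congr 1
        ring
    _ = _ := by rw [P_ofFn N M m k]

set_option maxHeartbeats 1000000 in
/-- `∑_{N ≤ k_1 ≤ … ≤ k_n ≤ 2^{Nd}} ∫ ∏_i h_{k_i} ≤ C(n,d,M)`, uniformly in `N`. -/
theorem cubeUnion_product_sum_bounded (n d M : ℕ) (hn : 1 ≤ n) (hd : 1 ≤ d) :
    ∃ C : ℝ, ∀ N : ℕ, 1 ≤ N →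
      ∑ k ∈ (Fintype.piFinset fun _ : Fin n => Finset.Icc N (2 ^ (N * d))).filter
          (fun k : Fin n → ℕ => ∀ i j : Fin n, i ≤ j → k i ≤ k j),
        (∫ x : EuclideanSpace ℝ (Fin d),
            ∏ i, (cubeUnion d N M (k i)).indicator (fun _ => (1 : ℝ)) x)
      ≤ C := by
  obtain ⟨m, rfl⟩ : ∃ m, n = m + 1 := ⟨n - 1, by omega⟩
  refine ⟨(2 * 3^d) * (4 * 6^d)^m, ?_⟩
  intro N hN
  set L : ℕ := 2 ^ (N * d) with hL
  set gf : Fin (m+1) → ℕ → ℝ := fun i =>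
    Fin.cases (fun _ : ℕ => ((3:ℝ) * (2:ℝ) ^ (-((N:ℤ)+(M:ℤ))))^d)
      (fun _ (s : ℕ) => ((3:ℝ) * ((2:ℝ) ^ (-(s:ℤ)) + (2:ℝ) ^ (-(M:ℤ)-(N:ℤ))))^d) i with hgf
  set φ : (Fin (m+1) → ℕ) → (Fin (m+1) → ℕ) := fun k =>
    fun i => Fin.cases (k 0) (fun j => k j.succ - k j.castSucc) i with hφ
  have hgf0 : ∀ i s, 0 ≤ gf i s := by
    intro i s
    induction i using Fin.cases with
    | zero => simp only [hgf, Fin.cases_zero]; positivity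
    | succ j => simp only [hgf, Fin.cases_succ]; positivity
  set Chains := (Fintype.piFinset fun _ : Fin (m+1) => Finset.Icc N L).filter
      (fun k : Fin (m+1) → ℕ => ∀ i j : Fin (m+1), i ≤ j → k i ≤ k j) with hChains
  -- termwise bound
  have hterm : ∀ k ∈ Chains, (∫ x : EuclideanSpace ℝ (Fin d),
      ∏ i, (cubeUnion d N M (k i)).indicator (fun _ => (1 : ℝ)) x) ≤ ∏ i, gf i (φ k i) := by
    intro k hk
    have hk1 := (Finset.mem_filter.1 hk).1
    have hk2 := (Finset.mem_filter.1 hk).2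
    have hkN : ∀ i, N ≤ k i := fun i => (Finset.mem_Icc.1 (Fintype.mem_piFinset.1 hk1 i)).1
    refine le_trans (term_le d N M k hkN) ?_
    have hB := B_ofFn_le N M k hkN
    have hprod : (∏ j : Fin m, (3 * ((2:ℝ) ^ ((k j.castSucc : ℤ) - (k j.succ : ℤ))
          + (2:ℝ)^(-(M:ℤ)-N))))
        = ∏ j : Fin m, (3 * ((2:ℝ) ^ (-((φ k j.succ : ℕ):ℤ)) + (2:ℝ)^(-(M:ℤ)-N))) := by
      apply Finset.prod_congr rfl
      intro j _
      have hle : k j.castSucc ≤ k j.succ := hk2 _ _ (Fin.castSucc_le_succ j)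
      have hφj : φ k j.succ = k j.succ - k j.castSucc := by
        simp only [hφ, Fin.cases_succ]
      rw [hφj]
      congr 2
      push_cast [Nat.cast_sub hle]
      ring
    rw [hprod] at hB
    have hB0 : 0 ≤ B N M (List.ofFn k) 1 := B_nonneg N M _ 1 zero_le_one
    calc (B N M (List.ofFn k) 1)^d
        ≤ (3 * (2:ℝ)^(-((N:ℤ)+(M:ℤ))) *
            ∏ j : Fin m, (3 * ((2:ℝ) ^ (-((φ k j.succ : ℕ):ℤ)) + (2:ℝ)^(-(M:ℤ)-N))))^d :=
          pow_le_pow_left₀ hB0 hB d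
      _ = ∏ i, gf i (φ k i) := by
          rw [Fin.prod_univ_succ]
          simp only [hgf, Fin.cases_zero, Fin.cases_succ]
          rw [mul_pow, ← Finset.prod_pow]
  -- injectivity of φ on Chains
  have hinj : ∀ x ∈ Chains, ∀ y ∈ Chains, φ x = φ y → x = y := by
    intro x hx y hy hxy
    have hmx := (Finset.mem_filter.1 hx).2
    have hmy := (Finset.mem_filter.1 hy).2
    funext i
    induction i using Fin.induction with
    | zero =>
        have h0 := congrFun hxy 0
        simpa only [hφ, Fin.cases_zero] using h0
    | succ j ih =>
        have h := congrFun hxy j.succ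
        simp only [hφ, Fin.cases_succ] at h
        have h1 : x j.castSucc ≤ x j.succ := hmx _ _ (Fin.castSucc_le_succ j)
        have h2 : y j.castSucc ≤ y j.succ := hmy _ _ (Fin.castSucc_le_succ j)
        omega
  -- image inside box
  have himg : Chains.image φ ⊆ Fintype.piFinset (fun _ : Fin (m+1) => Finset.range (L+1)) := by
    intro t ht
    obtain ⟨k, hk, rfl⟩ := Finset.mem_image.1 ht
    have hk1 := (Finset.mem_filter.1 hk).1
    have hkL : ∀ i, k i ≤ L := fun i => (Finset.mem_Icc.1 (Fintype.mem_piFinset.1 hk1 i)).2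
    rw [Fintype.mem_piFinset]
    intro i
    rw [Finset.mem_range]
    induction i using Fin.cases with
    | zero =>
        simp only [hφ, Fin.cases_zero]
        have := hkL 0; omega
    | succ j =>
        simp only [hφ, Fin.cases_succ]
        have := hkL j.succ; omega
  -- final numeric bound
  have hLcast : ((L:ℝ)+1) ≤ 2 * (2:ℝ)^((N*d:ℕ):ℤ) := by
    rw [hL, zpow_natCast]
    push_cast
    have : (1:ℝ) ≤ (2:ℝ)^(N*d) := one_le_pow₀ (by norm_num)
    linarith
  have hfinal : (∏ i, ∑ s ∈ Finset.range (L+1), gf i s) ≤ (2 * 3^d) * (4 * 6^d)^m := by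
    rw [Fin.prod_univ_succ]
    have hhead : (∑ s ∈ Finset.range (L+1), gf 0 s)
        = ((L:ℝ)+1) * ((3:ℝ)*(2:ℝ)^(-((N:ℤ)+(M:ℤ))))^d := by
      simp only [hgf, Fin.cases_zero, Finset.sum_const, Finset.card_range, nsmul_eq_mul]
      push_cast
      ring
    have h1 : (∑ s ∈ Finset.range (L+1), gf 0 s) ≤ 2*3^d := by
      rw [hhead]
      exact first_le d N M L hd hL
    have h2 : ∀ j : Fin m, (∑ s ∈ Finset.range (L+1), gf j.succ s) ≤ 4*6^d := by
      intro j
      simp only [hgf, Fin.cases_succ]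
      apply sum_g_le (L+1) d N M hd
      exact_mod_cast hLcast
    have hs0 : (0:ℝ) ≤ ∑ s ∈ Finset.range (L+1), gf 0 s :=
      Finset.sum_nonneg fun s _ => hgf0 0 s
    have hprodle : (∏ j : Fin m, ∑ s ∈ Finset.range (L+1), gf j.succ s)
        ≤ ∏ _j : Fin m, ((4:ℝ)*6^d) :=
      Finset.prod_le_prod (fun j _ => Finset.sum_nonneg fun s _ => hgf0 j.succ s)
        (fun j _ => h2 j)
    have hprodnn : (0:ℝ) ≤ ∏ j : Fin m, ∑ s ∈ Finset.range (L+1), gf j.succ s :=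
      Finset.prod_nonneg fun j _ => Finset.sum_nonneg fun s _ => hgf0 j.succ s
    calc (∑ s ∈ Finset.range (L+1), gf 0 s) * ∏ j : Fin m, ∑ s ∈ Finset.range (L+1), gf j.succ s
        ≤ (2*3^d) * ∏ _j : Fin m, ((4:ℝ)*6^d) :=
          mul_le_mul h1 hprodle hprodnn (by positivity)
      _ = (2 * 3^d) * (4 * 6^d)^m := by
          rw [Finset.prod_const, Finset.card_univ, Fintype.card_fin]
  -- assemble
  calc ∑ k ∈ Chains, (∫ x : EuclideanSpace ℝ (Fin d),
        ∏ i, (cubeUnion d N M (k i)).indicator (fun _ => (1 : ℝ)) x)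
      ≤ ∑ k ∈ Chains, ∏ i, gf i (φ k i) := Finset.sum_le_sum hterm
    _ = ∑ t ∈ Chains.image φ, ∏ i, gf i (t i) := by rw [Finset.sum_image hinj]
    _ ≤ ∑ t ∈ Fintype.piFinset (fun _ : Fin (m+1) => Finset.range (L+1)), ∏ i, gf i (t i) :=
        Finset.sum_le_sum_of_subset_of_nonneg himg
          (fun t _ _ => Finset.prod_nonneg fun i _ => hgf0 i (t i))
    _ = ∏ i, ∑ s ∈ Finset.range (L+1), gf i s := (Finset.prod_univ_sum _ _).symm
    _ ≤ (2 * 3^d) * (4 * 6^d)^m := hfinal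
end
end

section
/- Let 0 < q ≤ p < ∞ and d ≥ 1. With h_k (N ≤ k ≤ 2^{Nd}) the deterministic indicator functions built from cubes of sidelength 2^{-k-M} placed on a grid of spacing 2^{-k+N} in [0,1)^d, the L^p norm of (∑_{k=N}^{2^{Nd}} h_k^q)^{1/q} = (∑_k h_k)^{1/q} is bounded by a constant depending only on p, q, d, M and not on N. -/
open MeasureTheory Finset

namespace CubeAux
def D (N M k : ℕ) : Set ℝ :=
  ⋃ j ∈ Finset.range (2 ^ (k - N)),
    Set.Icc ((j : ℝ) * (2 : ℝ) ^ ((N : ℤ) - (k : ℤ)))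
      ((j : ℝ) * (2 : ℝ) ^ ((N : ℤ) - (k : ℤ)) + (2 : ℝ) ^ (-(k : ℤ) - (M : ℤ)))
def Covered (c : ℕ) (ℓ : ℝ) (A : Set ℝ) : Prop :=
  ∃ t : Fin c → ℝ, A ⊆ ⋃ i, Set.Icc (t i) (t i + ℓ)

lemma measurableSet_D (N M k : ℕ) : MeasurableSet (D N M k) := by
  apply MeasurableSet.biUnion (Finset.range _).countable_toSet
  intro j _
  exact measurableSet_Icc

lemma Covered.measure_le {c : ℕ} {ℓ : ℝ} {A : Set ℝ} (h : Covered c ℓ A) (hℓ : 0 ≤ ℓ) :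
    volume A ≤ ENNReal.ofReal (c * ℓ) := by
  obtain ⟨t, ht⟩ := h
  calc volume A ≤ volume (⋃ i, Set.Icc (t i) (t i + ℓ)) := measure_mono ht
    _ ≤ ∑ i : Fin c, volume (Set.Icc (t i) (t i + ℓ)) := measure_iUnion_fintype_le _ _
    _ = ∑ _i : Fin c, ENNReal.ofReal ℓ := by
        simp [Real.volume_Icc]
    _ = ENNReal.ofReal (c * ℓ) := by
        rw [Finset.sum_const, Finset.card_univ, Fintype.card_fin,
          ENNReal.ofReal_mul (by positivity), ENNReal.ofReal_natCast]
        simp [nsmul_eq_mul]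

lemma Covered.volume_lt_top {c : ℕ} {ℓ : ℝ} {A : Set ℝ} (h : Covered c ℓ A) (hℓ : 0 ≤ ℓ) :
    volume A < ⊤ :=
  lt_of_le_of_lt (h.measure_le hℓ) ENNReal.ofReal_lt_top


lemma Covered.inter_D {c : ℕ} {ℓ : ℝ} {A : Set ℝ} (h : Covered c ℓ A) (hℓ : 0 ≤ ℓ)
    (N M k' : ℕ) :
    Covered (c * (⌊ℓ * (2:ℝ) ^ ((k' : ℤ) - N)⌋₊ + 2)) ((2 : ℝ) ^ (-(k' : ℤ) - (M : ℤ)))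
      (A ∩ D N M k') := by
  obtain ⟨t, ht⟩ := h
  set g' : ℝ := (2 : ℝ) ^ ((N : ℤ) - (k' : ℤ)) with hg'
  set ℓ' : ℝ := (2 : ℝ) ^ (-(k' : ℤ) - (M : ℤ)) with hℓ'
  have hg'pos : 0 < g' := by positivity
  have hℓ'pos : 0 < ℓ' := by positivity
  set m : ℕ := ⌊ℓ * (2:ℝ) ^ ((k' : ℤ) - N)⌋₊ + 2 with hm
  refine ⟨fun ir => ((⌈(t ((finProdFinEquiv.symm ir).1) - ℓ') / g'⌉ : ℤ) +
      ((finProdFinEquiv.symm ir).2 : ℤ)) * g', ?_⟩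
  rintro x ⟨hxA, hxD⟩
  obtain ⟨i, hxi⟩ := Set.mem_iUnion.1 (ht hxA)
  simp only [D, Set.mem_iUnion, Finset.mem_range] at hxD
  obtain ⟨j, hj, hxj⟩ := hxD
  set jm : ℤ := ⌈(t i - ℓ') / g'⌉ with hjm
  have hx1 : t i ≤ x := hxi.1
  have hx2 : x ≤ t i + ℓ := hxi.2
  have hxj1 : (j : ℝ) * g' ≤ x := hxj.1
  have hxj2 : x ≤ (j : ℝ) * g' + ℓ' := hxj.2
  have hjm_le : jm ≤ (j : ℤ) := by
    rw [hjm, Int.ceil_le, div_le_iff₀ hg'pos]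
    push_cast
    linarith
  have h1 : (t i - ℓ') / g' ≤ (jm : ℝ) := Int.le_ceil _
  have h2 : (j : ℝ) ≤ (t i + ℓ) / g' := by
    rw [le_div_iff₀ hg'pos]; linarith
  have hℓ'g' : ℓ' / g' ≤ 1 := by
    rw [hℓ', hg', div_le_one hg'pos]
    apply zpow_le_zpow_right₀ (by norm_num : (1:ℝ) ≤ 2)
    omega
  have h5 : ℓ / g' = ℓ * (2:ℝ) ^ ((k' : ℤ) - N) := by
    rw [hg', div_eq_mul_inv, ← zpow_neg]
    ring_nf
  have h4 : ((j : ℝ) - (jm : ℝ)) ≤ ℓ * (2:ℝ) ^ ((k' : ℤ) - N) + 1 := by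
    have hs : (j : ℝ) - (jm : ℝ) ≤ (t i + ℓ) / g' - (t i - ℓ') / g' := sub_le_sub h2 h1
    have he : (t i + ℓ) / g' - (t i - ℓ') / g' = ℓ / g' + ℓ' / g' := by ring
    rw [he, h5] at hs
    linarith
  have hj_ub : ((j : ℤ) - jm : ℤ) < (m : ℤ) := by
    have hfl := Nat.lt_floor_add_one (ℓ * (2:ℝ) ^ ((k' : ℤ) - N))
    have h6 : ((j : ℝ) - (jm : ℝ)) < (m : ℝ) := by
      rw [hm]; push_cast; linarith
    have : ((j : ℤ) - jm : ℝ) < ((m : ℤ) : ℝ) := by push_cast; linarith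
    exact_mod_cast this
  have e0 : (((j : ℤ) - jm).toNat : ℤ) = (j : ℤ) - jm := Int.toNat_of_nonneg (by omega)
  have e2 : ((((j : ℤ) - jm).toNat : ℕ) : ℝ) = (j : ℝ) - (jm : ℝ) := by
    exact_mod_cast congrArg (fun z : ℤ => (z : ℝ)) e0
  refine Set.mem_iUnion.2 ⟨finProdFinEquiv (i, ⟨((j : ℤ) - jm).toNat, by omega⟩), ?_⟩
  simp only [Equiv.symm_apply_apply]
  rw [← hjm]
  constructor
  · have : ((jm : ℝ) + ((((j : ℤ) - jm).toNat : ℤ) : ℝ)) * g' = (j : ℝ) * g' := by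
      rw [show ((((j : ℤ) - jm).toNat : ℤ) : ℝ) = (j : ℝ) - (jm : ℝ) by exact_mod_cast e2]
      ring
    push_cast at this ⊢
    nlinarith [this, hxj1]
  · have : ((jm : ℝ) + ((((j : ℤ) - jm).toNat : ℤ) : ℝ)) * g' = (j : ℝ) * g' := by
      rw [show ((((j : ℤ) - jm).toNat : ℤ) : ℝ) = (j : ℝ) - (jm : ℝ) by exact_mod_cast e2]
      ring
    push_cast at this ⊢
    nlinarith [this, hxj2]

lemma covered_D (N M k : ℕ) :
    Covered (2 ^ (k - N)) ((2 : ℝ) ^ (-(k : ℤ) - (M : ℤ))) (D N M k) := by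
  refine ⟨fun j => (j : ℝ) * (2 : ℝ) ^ ((N : ℤ) - (k : ℤ)), ?_⟩
  intro x hx
  simp only [D, Set.mem_iUnion, Finset.mem_range] at hx
  obtain ⟨j, hj, hxj⟩ := hx
  exact Set.mem_iUnion.2 ⟨⟨j, hj⟩, hxj⟩

lemma chain (N M : ℕ) : ∀ (m : ℕ) (g : Fin (m+1) → ℕ), Monotone g → N ≤ g 0 →
    ∃ c : ℕ, Covered c ((2:ℝ) ^ (-(g (Fin.last m) : ℤ) - (M : ℤ))) (⋂ i, D N M (g i)) ∧
      (c : ℝ) ≤ (2:ℝ) ^ ((g 0 : ℤ) - N) *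
        ∏ i : Fin m, ((2:ℝ) ^ ((g i.succ : ℤ) - (g i.castSucc : ℤ) - M - N) + 2) := by
  intro m
  induction m with
  | zero =>
    intro g _ hN
    refine ⟨2 ^ (g 0 - N), ?_, ?_⟩
    · have : (⋂ i, D N M (g i)) = D N M (g 0) := by
        ext x; simp [Set.mem_iInter, Fin.forall_fin_one]
      rw [show (Fin.last 0 : Fin 1) = 0 from rfl, this]
      exact covered_D N M (g 0)
    · simp only [Finset.univ_eq_empty, Finset.prod_empty, mul_one]
      rw [show ((g 0 : ℤ) - N) = ((g 0 - N : ℕ) : ℤ) by omega]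
      rw [zpow_natCast]
      norm_cast
  | succ m ih =>
    intro g hg hN
    set g' : Fin (m+1) → ℕ := fun i => g i.castSucc with hg'def
    have hg'mono : Monotone g' := fun a b hab => hg (Fin.castSucc_le_castSucc_iff.2 hab)
    have hg'0 : N ≤ g' 0 := by simpa [hg'def] using hN
    obtain ⟨c, hcov, hc⟩ := ih g' hg'mono hg'0
    have hℓp : (0:ℝ) ≤ (2:ℝ) ^ (-(g' (Fin.last m) : ℤ) - (M : ℤ)) := by positivity
    set k' : ℕ := g (Fin.last (m+1)) with hk'
    have hcov2 := hcov.inter_D hℓp N M k'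
    set mm : ℕ := ⌊(2:ℝ) ^ (-(g' (Fin.last m) : ℤ) - (M : ℤ)) * (2:ℝ) ^ ((k' : ℤ) - N)⌋₊ + 2
      with hmm
    have hset : (⋂ i, D N M (g' i)) ∩ D N M k' = ⋂ i, D N M (g i) := by
      ext x
      simp only [Set.mem_inter_iff, Set.mem_iInter, hg'def, hk']
      constructor
      · rintro ⟨h1, h2⟩ i
        refine Fin.lastCases ?_ ?_ i
        · exact h2
        · exact fun j => h1 j
      · intro h
        exact ⟨fun j => h _, h _⟩
    rw [hset] at hcov2
    refine ⟨c * mm, hcov2, ?_⟩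
    have hmm_le : (mm : ℝ) ≤ (2:ℝ) ^ ((g (Fin.last (m+1)) : ℤ)
        - (g (Fin.last m).castSucc : ℤ) - M - N) + 2 := by
      have h0 : (0:ℝ) ≤ (2:ℝ) ^ (-(g' (Fin.last m) : ℤ) - (M : ℤ)) * (2:ℝ) ^ ((k' : ℤ) - N) := by
        positivity
      have hfl := Nat.floor_le h0
      have heq : (2:ℝ) ^ (-(g' (Fin.last m) : ℤ) - (M : ℤ)) * (2:ℝ) ^ ((k' : ℤ) - N)
          = (2:ℝ) ^ ((g (Fin.last (m+1)) : ℤ) - (g (Fin.last m).castSucc : ℤ) - M - N) := by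
        rw [← zpow_add₀ (by norm_num : (2:ℝ) ≠ 0)]
        congr 1
        simp only [hg'def, hk']
        ring
      rw [hmm]
      push_cast
      rw [← heq]
      linarith
    calc ((c * mm : ℕ) : ℝ) = (c : ℝ) * (mm : ℝ) := by push_cast; ring
      _ ≤ ((2:ℝ) ^ ((g' 0 : ℤ) - N) *
            ∏ i : Fin m, ((2:ℝ) ^ ((g' i.succ : ℤ) - (g' i.castSucc : ℤ) - M - N) + 2)) *
          ((2:ℝ) ^ ((g (Fin.last (m+1)) : ℤ) - (g (Fin.last m).castSucc : ℤ) - M - N) + 2) := by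
        apply mul_le_mul hc hmm_le (by positivity)
        positivity
      _ = (2:ℝ) ^ ((g 0 : ℤ) - N) *
          ∏ i : Fin (m+1), ((2:ℝ) ^ ((g i.succ : ℤ) - (g i.castSucc : ℤ) - M - N) + 2) := by
        rw [Fin.prod_univ_castSucc
          (f := fun i : Fin (m+1) => ((2:ℝ) ^ ((g i.succ : ℤ) - (g i.castSucc : ℤ) - M - N) + 2))]
        simp only [hg'def, Fin.succ_castSucc, Fin.succ_last, Fin.castSucc_zero]
        ring


lemma volume_iInter_D_le (N M m : ℕ) (g : Fin (m+1) → ℕ) (hg : Monotone g) (hN : N ≤ g 0) :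
    (volume (⋂ i, D N M (g i))).toReal ≤
      (2:ℝ) ^ ((g 0 : ℤ) - N) * (2:ℝ) ^ (-(g (Fin.last m) : ℤ) - (M : ℤ)) *
        ∏ i : Fin m, ((2:ℝ) ^ ((g i.succ : ℤ) - (g i.castSucc : ℤ) - M - N) + 2) := by
  obtain ⟨c, hcov, hc⟩ := chain N M m g hg hN
  have hℓ : (0:ℝ) ≤ (2:ℝ) ^ (-(g (Fin.last m) : ℤ) - (M : ℤ)) := by positivity
  have h1 := hcov.measure_le hℓ
  have h2 : (volume (⋂ i, D N M (g i))).toReal ≤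
      (c : ℝ) * (2:ℝ) ^ (-(g (Fin.last m) : ℤ) - (M : ℤ)) :=
    ENNReal.toReal_le_of_le_ofReal (by positivity) h1
  calc (volume (⋂ i, D N M (g i))).toReal
      ≤ (c : ℝ) * (2:ℝ) ^ (-(g (Fin.last m) : ℤ) - (M : ℤ)) := h2
    _ ≤ ((2:ℝ) ^ ((g 0 : ℤ) - N) *
          ∏ i : Fin m, ((2:ℝ) ^ ((g i.succ : ℤ) - (g i.castSucc : ℤ) - M - N) + 2)) *
        (2:ℝ) ^ (-(g (Fin.last m) : ℤ) - (M : ℤ)) := by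
        apply mul_le_mul_of_nonneg_right hc hℓ
    _ = _ := by ring

lemma volume_iInter_D_lt_top (N M m : ℕ) (g : Fin (m+1) → ℕ) (hg : Monotone g) (hN : N ≤ g 0) :
    volume (⋂ i, D N M (g i)) < ⊤ := by
  obtain ⟨c, hcov, -⟩ := chain N M m g hg hN
  exact hcov.volume_lt_top (by positivity)

lemma measurableSet_pi_set {d : ℕ} (A : Set ℝ) (hA : MeasurableSet A) :
    MeasurableSet {x : EuclideanSpace ℝ (Fin d) | ∀ i, x i ∈ A} := by
  have : {x : EuclideanSpace ℝ (Fin d) | ∀ i, x i ∈ A} = ⋂ i, (fun x : EuclideanSpace ℝ (Fin d) => x i) ⁻¹' A := by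
    ext x; simp
  rw [this]
  exact MeasurableSet.iInter fun i =>
    ((measurable_pi_apply i).comp (MeasurableEquiv.toLp 2 (Fin d → ℝ)).symm.measurable) hA

lemma volume_pi_set {d : ℕ} (A : Set ℝ) (hA : MeasurableSet A) :
    volume {x : EuclideanSpace ℝ (Fin d) | ∀ i, x i ∈ A} = volume A ^ d := by
  have h := (EuclideanSpace.volume_preserving_symm_measurableEquiv_toLp (Fin d)).measure_preimage
    (s := Set.univ.pi fun _ : Fin d => A)
    (MeasurableSet.univ_pi fun _ => hA).nullMeasurableSet
  have hpre : (MeasurableEquiv.toLp 2 (Fin d → ℝ)).symm ⁻¹' (Set.univ.pi fun _ : Fin d => A)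
      = {x : EuclideanSpace ℝ (Fin d) | ∀ i, x i ∈ A} := by
    ext x
    simp [Set.mem_pi]
  rw [hpre] at h
  rw [h, volume_pi_pi]
  simp [Finset.prod_const]


lemma cubeUnion_eq (d N M k : ℕ) :
    cubeUnion d N M k = {x : EuclideanSpace ℝ (Fin d) | ∀ i, x i ∈ D N M k} := by
  ext x
  simp only [cubeUnion, Set.mem_iUnion, Set.mem_preimage, Set.mem_pi, Set.mem_univ, forall_true_left,
    Set.mem_setOf_eq]
  constructor
  · rintro ⟨j, hj, hx⟩ i
    simp only [D, Set.mem_iUnion, Finset.mem_range]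
    exact ⟨j i, hj i, hx i⟩
  · intro hx
    choose j hj hxj using fun i => by
      have h := hx i
      simp only [D, Set.mem_iUnion, Finset.mem_range] at h
      exact h
    exact ⟨j, hj, fun i => hxj i⟩

lemma iInter_cubeUnion (d N M : ℕ) {n : ℕ} (f : Fin n → ℕ) :
    (⋂ i, cubeUnion d N M (f i))
      = {x : EuclideanSpace ℝ (Fin d) | ∀ t, x t ∈ ⋂ i, D N M (f i)} := by
  simp only [cubeUnion_eq]
  ext x
  simp only [Set.mem_iInter, Set.mem_setOf_eq]
  exact forall_comm

lemma volume_iInter_cubeUnion (d N M : ℕ) {n : ℕ} (f : Fin n → ℕ) :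
    volume (⋂ i, cubeUnion d N M (f i)) = volume (⋂ i, D N M (f i)) ^ d := by
  rw [iInter_cubeUnion,
    volume_pi_set _ (MeasurableSet.iInter fun i => measurableSet_D N M (f i))]

lemma measurableSet_cubeUnion (d N M k : ℕ) : MeasurableSet (cubeUnion d N M k) := by
  rw [cubeUnion_eq]
  exact measurableSet_pi_set _ (measurableSet_D N M k)

lemma volume_cubeUnion_lt_top (d N M k : ℕ) (hN : N ≤ k) : volume (cubeUnion d N M k) < ⊤ := by
  have h : (⋂ _i : Fin 1, cubeUnion d N M k) = cubeUnion d N M k := Set.iInter_const _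
  rw [← h, volume_iInter_cubeUnion]
  have h2 := volume_iInter_D_lt_top N M 0 (fun _ => k) monotone_const hN
  exact ENNReal.pow_lt_top h2

lemma monotone_ext {m : ℕ} (g g' : Fin (m+1) → ℕ) (hg : Monotone g) (hg' : Monotone g')
    (h0 : g 0 = g' 0)
    (hgap : ∀ i : Fin m, g i.succ - g i.castSucc = g' i.succ - g' i.castSucc) :
    g = g' := by
  funext i
  induction i using Fin.induction with
  | zero => exact h0
  | succ i ih =>
    have h1 : g i.castSucc ≤ g i.succ := hg (Fin.castSucc_lt_succ (i := i)).le
    have h1' : g' i.castSucc ≤ g' i.succ := hg' (Fin.castSucc_lt_succ (i := i)).le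
    have h2 := hgap i
    omega

lemma telescope {m : ℕ} (g : Fin (m+1) → ℕ) (hg : Monotone g) :
    g 0 + (∑ i : Fin m, (g i.succ - g i.castSucc)) = g (Fin.last m) := by
  induction m with
  | zero => simp [Fin.last]
  | succ m ih =>
    have hg' : Monotone (fun i : Fin (m+1) => g i.castSucc) :=
      fun a b hab => hg (Fin.castSucc_le_castSucc_iff.2 hab)
    have ihg := ih (fun i => g i.castSucc) hg'
    simp only [Fin.succ_castSucc, Fin.castSucc_zero] at ihg
    rw [Fin.sum_univ_castSucc (f := fun i : Fin (m+1) => g i.succ - g i.castSucc)]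
    simp only [Fin.succ_castSucc, Fin.succ_last]
    have hle : g (Fin.last m).castSucc ≤ g (Fin.last m.succ) := hg (Fin.le_last _)
    have heq : g (Fin.last (m+1)) = g (Fin.last m.succ) := rfl
    omega


/-- The summand in the per-gap geometric factor. -/
noncomputable def W (M N u : ℕ) : ℝ := ((2:ℝ)⁻¹) ^ u * ((2:ℝ) ^ ((u:ℤ) - M - N) + 2)

lemma W_nonneg (M N u : ℕ) : 0 ≤ W M N u := by unfold W; positivity

lemma inv_two_pow_eq (u : ℕ) : ((2:ℝ)⁻¹) ^ u = (2:ℝ) ^ (-(u:ℤ)) := by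
  rw [zpow_neg, zpow_natCast, inv_pow]

lemma W_eq (M N u : ℕ) : W M N u = (2:ℝ) ^ (-(M:ℤ) - N) + 2 * ((2:ℝ)⁻¹) ^ u := by
  unfold W
  rw [inv_two_pow_eq, mul_add, ← zpow_add₀ (two_ne_zero), mul_comm ((2:ℝ) ^ (-(u:ℤ))) 2]
  congr 2
  ring

lemma add_pow_le' (a b : ℝ) (ha : 0 ≤ a) (hb : 0 ≤ b) (d : ℕ) :
    (a + b) ^ d ≤ 2 ^ d * (a ^ d + b ^ d) := by
  have h1 : a + b ≤ 2 * max a b := by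
    rcases le_total a b with h | h
    · rw [max_eq_right h]; linarith
    · rw [max_eq_left h]; linarith
  have h2 : (a + b) ^ d ≤ (2 * max a b) ^ d :=
    pow_le_pow_left₀ (by positivity) h1 d
  have h3 : (max a b) ^ d ≤ a ^ d + b ^ d := by
    rcases le_total a b with h | h
    · rw [max_eq_right h]; nlinarith [pow_nonneg ha d]
    · rw [max_eq_left h]; nlinarith [pow_nonneg hb d]
  calc (a + b) ^ d ≤ (2 * max a b) ^ d := h2
    _ = 2 ^ d * (max a b) ^ d := by rw [mul_pow]
    _ ≤ 2 ^ d * (a ^ d + b ^ d) := by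
        apply mul_le_mul_of_nonneg_left h3 (by positivity)

lemma factor_bound (d M N K : ℕ) (hd : 1 ≤ d)
    (hK : ((K:ℝ) + 1) * (2:ℝ) ^ (-((N:ℤ) * d)) ≤ 2) :
    ∑ u ∈ Finset.range (K+1), (W M N u) ^ d ≤ (2:ℝ) ^ (2*d+2) := by
  have ha : (0:ℝ) ≤ (2:ℝ) ^ (-(M:ℤ) - N) := by positivity
  have step : ∀ u : ℕ, (W M N u) ^ d ≤
      (2:ℝ) ^ d * (((2:ℝ) ^ (-(M:ℤ) - N)) ^ d + (2:ℝ) ^ d * ((2:ℝ)⁻¹) ^ u) := by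
    intro u
    rw [W_eq]
    refine le_trans (add_pow_le' _ _ ha (by positivity) d) ?_
    apply mul_le_mul_of_nonneg_left _ (by positivity)
    apply add_le_add_right
    rw [mul_pow, mul_comm]
    have hle : ((2:ℝ)⁻¹ ^ u) ^ d ≤ (2:ℝ)⁻¹ ^ u := by
      rw [← pow_mul]
      apply pow_le_pow_of_le_one (by norm_num) (by norm_num)
      exact Nat.le_mul_of_pos_right u hd
    calc ((2:ℝ)⁻¹ ^ u) ^ d * 2 ^ d ≤ (2:ℝ)⁻¹ ^ u * 2 ^ d :=
          mul_le_mul_of_nonneg_right hle (by positivity)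
      _ = 2 ^ d * (2:ℝ)⁻¹ ^ u := by ring
  have hsum1 : ∑ u ∈ Finset.range (K+1), ((2:ℝ) ^ (-(M:ℤ) - N)) ^ d ≤ 2 := by
    rw [Finset.sum_const, Finset.card_range, nsmul_eq_mul]
    push_cast
    have h1 : ((2:ℝ) ^ (-(M:ℤ) - N)) ^ d = (2:ℝ) ^ ((-(M:ℤ) - N) * d) := by
      rw [← zpow_natCast ((2:ℝ) ^ (-(M:ℤ) - N)) d, ← zpow_mul]
    have h2 : (2:ℝ) ^ ((-(M:ℤ) - N) * d) ≤ (2:ℝ) ^ (-((N:ℤ) * d)) := by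
      apply zpow_le_zpow_right₀ (by norm_num : (1:ℝ) ≤ 2)
      have : (0:ℤ) ≤ (M:ℤ) * d := by positivity
      nlinarith
    calc ((K:ℝ)+1) * ((2:ℝ) ^ (-(M:ℤ) - N)) ^ d
        ≤ ((K:ℝ)+1) * (2:ℝ) ^ (-((N:ℤ) * d)) := by
          rw [h1]
          apply mul_le_mul_of_nonneg_left h2 (by positivity)
      _ ≤ 2 := hK
  have hsum2 : ∑ u ∈ Finset.range (K+1), (2:ℝ) ^ d * ((2:ℝ)⁻¹) ^ u ≤ (2:ℝ) ^ d * 2 := by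
    rw [← Finset.mul_sum]
    apply mul_le_mul_of_nonneg_left _ (by positivity)
    have := sum_geometric_two_le (K+1)
    simpa [one_div] using this
  calc ∑ u ∈ Finset.range (K+1), (W M N u) ^ d
      ≤ ∑ u ∈ Finset.range (K+1),
          ((2:ℝ) ^ d * (((2:ℝ) ^ (-(M:ℤ) - N)) ^ d + (2:ℝ) ^ d * ((2:ℝ)⁻¹) ^ u)) := by
        exact Finset.sum_le_sum fun u _ => step u
    _ = (2:ℝ) ^ d * (∑ u ∈ Finset.range (K+1), ((2:ℝ) ^ (-(M:ℤ) - N)) ^ d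
          + ∑ u ∈ Finset.range (K+1), (2:ℝ) ^ d * ((2:ℝ)⁻¹) ^ u) := by
        rw [← Finset.mul_sum, Finset.sum_add_distrib]
    _ ≤ (2:ℝ) ^ d * (2 + (2:ℝ) ^ d * 2) := by
        apply mul_le_mul_of_nonneg_left (add_le_add hsum1 hsum2) (by positivity)
    _ ≤ (2:ℝ) ^ (2*d+2) := by
        have h2d : (2:ℝ) + (2:ℝ)^d * 2 ≤ (2:ℝ)^(d+2) := by
          have h1 : (2:ℝ) ≤ (2:ℝ)^(d+1) := by
            calc (2:ℝ) = 2^1 := by norm_num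
              _ ≤ 2^(d+1) := by
                apply pow_le_pow_right₀ (by norm_num)
                omega
          have h2 : (2:ℝ)^d * 2 = 2^(d+1) := by rw [pow_succ]
          have h3 : (2:ℝ)^(d+2) = 2^(d+1) + 2^(d+1) := by rw [pow_succ]; ring
          linarith
        calc (2:ℝ) ^ d * (2 + (2:ℝ)^d * 2) ≤ (2:ℝ)^d * (2:ℝ)^(d+2) := by
              apply mul_le_mul_of_nonneg_left h2d (by positivity)
          _ = (2:ℝ) ^ (2*d+2) := by rw [← pow_add]; congr 1; ring


lemma main_sum_bound (d N M mm : ℕ) (hd : 1 ≤ d) :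
    ∑ f ∈ Fintype.piFinset (fun _ : Fin (mm+1) => Finset.Icc N (2^(N*d))),
      (volume (⋂ i, cubeUnion d N M (f i))).toReal
      ≤ ((mm+1).factorial : ℝ) * 2 * ((2:ℝ) ^ (2*d+2)) ^ mm := by
  classical
  set K : ℕ := 2^(N*d) with hKdef
  set P := Fintype.piFinset (fun _ : Fin (mm+1) => Finset.Icc N K) with hP
  set G : (Fin (mm+1) → ℕ) → (Fin (mm+1) → ℕ) := fun f => f ∘ Tuple.sort f with hG
  set Φ : (Fin (mm+1) → ℕ) → Equiv.Perm (Fin (mm+1)) × (ℕ × (Fin mm → ℕ)) :=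
    fun f => (Tuple.sort f, (G f 0, fun i => G f i.succ - G f i.castSucc)) with hΦ
  set Z : (Fin mm → ℕ) → ℝ :=
    fun δ => ((2:ℝ) ^ (-(N:ℤ) - M) * ∏ i, W M N (δ i)) ^ d with hZ
  have hZnonneg : ∀ δ, 0 ≤ Z δ := by
    intro δ
    apply pow_nonneg
    apply mul_nonneg (by positivity)
    exact Finset.prod_nonneg fun i _ => W_nonneg M N (δ i)
  -- basic numeric facts
  have hcast : (K:ℝ) = (2:ℝ) ^ ((N:ℤ) * d) := by
    have h : ((N:ℤ) * d) = ((N*d : ℕ) : ℤ) := by push_cast; ring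
    rw [hKdef, h, zpow_natCast]
    push_cast
    ring
  have hKkey : ((K:ℝ) + 1) * (2:ℝ) ^ (-((N:ℤ) * d)) ≤ 2 := by
    have hmul : (K:ℝ) * (2:ℝ) ^ (-((N:ℤ) * d)) = 1 := by
      rw [hcast, ← zpow_add₀ (two_ne_zero : (2:ℝ) ≠ 0)]
      simp
    have hpos : (0:ℝ) < (2:ℝ) ^ (-((N:ℤ) * d)) := by positivity
    have hneg : (2:ℝ) ^ (-((N:ℤ) * d)) ≤ 1 := by
      rw [show (1:ℝ) = (2:ℝ) ^ (0:ℤ) by norm_num]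
      apply zpow_le_zpow_right₀ (by norm_num : (1:ℝ) ≤ 2)
      have : (0:ℤ) ≤ (N:ℤ) * d := by positivity
      omega
    nlinarith
  -- claim 1 : per-tuple bound
  have claim1 : ∀ f ∈ P, (volume (⋂ i, cubeUnion d N M (f i))).toReal ≤ Z ((Φ f).2.2) := by
    intro f hf
    have hmem : ∀ i, f i ∈ Finset.Icc N K := Fintype.mem_piFinset.1 hf
    have hNle : ∀ i, N ≤ f i := fun i => (Finset.mem_Icc.1 (hmem i)).1
    have hgmono : Monotone (G f) := Tuple.monotone_sort f
    have hDeq : (⋂ i, D N M (f i)) = ⋂ i, D N M (G f i) :=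
      ((Tuple.sort f).surjective.iInter_comp (fun i => D N M (f i))).symm
    have hN0 : N ≤ G f 0 := hNle _
    have hvol := volume_iInter_D_le N M mm (G f) hgmono hN0
    have e1 : (volume (⋂ i, cubeUnion d N M (f i))).toReal
        = ((volume (⋂ i, D N M (G f i))).toReal) ^ d := by
      rw [volume_iInter_cubeUnion, hDeq, ENNReal.toReal_pow]
    set δ : Fin mm → ℕ := fun i => G f i.succ - G f i.castSucc with hδdef
    have hs : ((∑ i, δ i : ℕ) : ℤ) = (G f (Fin.last mm) : ℤ) - (G f 0 : ℤ) := by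
      have h := telescope (G f) hgmono
      have h2 : G f 0 + ∑ i, δ i = G f (Fin.last mm) := h
      omega
    have hprodeq : (∏ i : Fin mm,
          ((2:ℝ) ^ ((G f i.succ : ℤ) - (G f i.castSucc : ℤ) - M - N) + 2))
        = ∏ i : Fin mm, ((2:ℝ) ^ (((δ i : ℕ) : ℤ) - M - N) + 2) := by
      refine Finset.prod_congr rfl fun i _ => ?_
      have hle := hgmono (Fin.castSucc_lt_succ (i := i)).le
      have : ((δ i : ℕ) : ℤ) = (G f i.succ : ℤ) - (G f i.castSucc : ℤ) := by
        simp only [hδdef]; omega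
      rw [this]
    have hW : (∏ i : Fin mm, W M N (δ i))
        = (2:ℝ) ^ (-((∑ i, δ i : ℕ) : ℤ)) *
          ∏ i : Fin mm, ((2:ℝ) ^ (((δ i : ℕ) : ℤ) - M - N) + 2) := by
      simp only [W]
      rw [Finset.prod_mul_distrib, Finset.prod_pow_eq_pow_sum, inv_two_pow_eq]
    have hbase : (2:ℝ) ^ ((G f 0 : ℤ) - N) * (2:ℝ) ^ (-(G f (Fin.last mm) : ℤ) - M) *
        ∏ i : Fin mm, ((2:ℝ) ^ ((G f i.succ : ℤ) - (G f i.castSucc : ℤ) - M - N) + 2)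
        = (2:ℝ) ^ (-(N:ℤ) - M) * ∏ i, W M N (δ i) := by
      rw [hprodeq, hW, ← mul_assoc, ← zpow_add₀ (two_ne_zero : (2:ℝ) ≠ 0),
        ← zpow_add₀ (two_ne_zero : (2:ℝ) ≠ 0)]
      congr 2
      omega
    have e2 : ((volume (⋂ i, D N M (G f i))).toReal) ^ d
        ≤ ((2:ℝ) ^ (-(N:ℤ) - M) * ∏ i, W M N (δ i)) ^ d := by
      rw [← hbase]
      exact pow_le_pow_left₀ ENNReal.toReal_nonneg hvol d
    rw [e1]
    exact e2
  -- target finset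
  set T := (Finset.univ : Finset (Equiv.Perm (Fin (mm+1)))) ×ˢ
    (Finset.Icc N K ×ˢ Fintype.piFinset fun _ : Fin mm => Finset.range (K+1)) with hT
  have claim_mem : ∀ f ∈ P, Φ f ∈ T := by
    intro f hf
    have hmem : ∀ i, f i ∈ Finset.Icc N K := Fintype.mem_piFinset.1 hf
    rw [hT, Finset.mem_product]
    refine ⟨Finset.mem_univ _, ?_⟩
    rw [Finset.mem_product]
    constructor
    · exact hmem _
    · rw [Fintype.mem_piFinset]
      intro i
      rw [Finset.mem_range]
      have h1 := (Finset.mem_Icc.1 (hmem (Tuple.sort f i.succ))).2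
      have h2 : G f i.succ = f (Tuple.sort f i.succ) := rfl
      simp only [hΦ]
      omega
  have claim_inj : ∀ f1 ∈ P, ∀ f2 ∈ P, Φ f1 = Φ f2 → f1 = f2 := by
    intro f1 _ f2 _ heq
    have hσ : Tuple.sort f1 = Tuple.sort f2 := congrArg Prod.fst heq
    have h0 : G f1 0 = G f2 0 := congrArg (fun y => y.2.1) heq
    have hgap : ∀ i : Fin mm, G f1 i.succ - G f1 i.castSucc
        = G f2 i.succ - G f2 i.castSucc :=
      fun i => congrFun (congrArg (fun y => y.2.2) heq) i
    have hGeq : G f1 = G f2 :=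
      monotone_ext _ _ (Tuple.monotone_sort f1) (Tuple.monotone_sort f2) h0 hgap
    funext x
    have hmid := congrFun hGeq ((Tuple.sort f1).symm x)
    simp only [hG, Function.comp_apply] at hmid
    calc f1 x = f1 (Tuple.sort f1 ((Tuple.sort f1).symm x)) := by
          rw [Equiv.apply_symm_apply]
      _ = f2 (Tuple.sort f2 ((Tuple.sort f1).symm x)) := hmid
      _ = f2 x := by rw [← hσ, Equiv.apply_symm_apply]
  have hSδ : ∑ δ ∈ Fintype.piFinset (fun _ : Fin mm => Finset.range (K+1)), Z δ
      = ((2:ℝ) ^ (-(N:ℤ) - M)) ^ d *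
        ∏ _i : Fin mm, ∑ u ∈ Finset.range (K+1), (W M N u) ^ d := by
    rw [show (∏ _i : Fin mm, ∑ u ∈ Finset.range (K+1), (W M N u) ^ d)
        = ∑ g ∈ Fintype.piFinset (fun _ : Fin mm => Finset.range (K+1)),
            ∏ i : Fin mm, (W M N (g i)) ^ d from
      Finset.prod_univ_sum (fun _ => Finset.range (K+1)) (fun _ u => (W M N u) ^ d)]
    rw [Finset.mul_sum]
    refine Finset.sum_congr rfl fun δ _ => ?_
    rw [hZ]
    simp only
    rw [mul_pow, Finset.prod_pow]
  have hfac := factor_bound d M N K hd hKkey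
  have hfac_nonneg : (0:ℝ) ≤ ∑ u ∈ Finset.range (K+1), (W M N u) ^ d :=
    Finset.sum_nonneg fun u _ => pow_nonneg (W_nonneg M N u) d
  have hcard : ((Finset.Icc N K).card : ℝ) ≤ (K : ℝ) + 1 := by
    have : (Finset.Icc N K).card ≤ K + 1 := by
      rw [Nat.card_Icc]; exact Nat.sub_le _ _
    exact_mod_cast this
  have hhead : ((Finset.Icc N K).card : ℝ) * ((2:ℝ) ^ (-(N:ℤ) - M)) ^ d ≤ 2 := by
    have h1 : ((2:ℝ) ^ (-(N:ℤ) - M)) ^ d = (2:ℝ) ^ ((-(N:ℤ) - M) * d) := by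
      rw [← zpow_natCast ((2:ℝ) ^ (-(N:ℤ) - M)) d, ← zpow_mul]
    have h2 : (2:ℝ) ^ ((-(N:ℤ) - M) * d) ≤ (2:ℝ) ^ (-((N:ℤ) * d)) := by
      apply zpow_le_zpow_right₀ (by norm_num : (1:ℝ) ≤ 2)
      have : (0:ℤ) ≤ (M:ℤ) * d := by positivity
      nlinarith
    calc ((Finset.Icc N K).card : ℝ) * ((2:ℝ) ^ (-(N:ℤ) - M)) ^ d
        ≤ ((K:ℝ) + 1) * (2:ℝ) ^ (-((N:ℤ) * d)) := by
          rw [h1]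
          apply mul_le_mul hcard h2 (by positivity) (by positivity)
      _ ≤ 2 := hKkey
  calc ∑ f ∈ P, (volume (⋂ i, cubeUnion d N M (f i))).toReal
      ≤ ∑ f ∈ P, Z ((Φ f).2.2) := Finset.sum_le_sum claim1
    _ = ∑ y ∈ P.image Φ, Z y.2.2 := by
        rw [Finset.sum_image (fun a ha b hb h => claim_inj a ha b hb h)]
    _ ≤ ∑ y ∈ T, Z y.2.2 := Finset.sum_le_sum_of_subset_of_nonneg
        (Finset.image_subset_iff.2 claim_mem) (fun y _ _ => hZnonneg _)
    _ = ((Finset.univ : Finset (Equiv.Perm (Fin (mm+1)))).card : ℝ) *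
        (((Finset.Icc N K).card : ℝ) *
          ∑ δ ∈ Fintype.piFinset (fun _ : Fin mm => Finset.range (K+1)), Z δ) := by
        rw [hT, Finset.sum_product]
        have hinner : ∀ x : Equiv.Perm (Fin (mm+1)),
            (∑ y ∈ Finset.Icc N K ×ˢ (Fintype.piFinset fun _ : Fin mm => Finset.range (K+1)),
              Z (x, y).2.2)
            = ((Finset.Icc N K).card : ℝ) *
              ∑ δ ∈ Fintype.piFinset (fun _ : Fin mm => Finset.range (K+1)), Z δ := by
          intro x
          rw [Finset.sum_product]
          simp only [Finset.sum_const, nsmul_eq_mul]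
        simp only [hinner, Finset.sum_const, nsmul_eq_mul]
        congr 1
        rw [Finset.sum_product]
        simp only [Finset.sum_const, nsmul_eq_mul]
    _ ≤ ((mm+1).factorial : ℝ) * 2 * ((2:ℝ) ^ (2*d+2)) ^ mm := by
        have hcardperm : ((Finset.univ : Finset (Equiv.Perm (Fin (mm+1)))).card : ℝ)
            = ((mm+1).factorial : ℝ) := by
          rw [Finset.card_univ, Fintype.card_perm, Fintype.card_fin]
        rw [hcardperm, hSδ]
        rw [Finset.prod_const, Finset.card_univ, Fintype.card_fin]
        have hprodle : (∑ u ∈ Finset.range (K+1), (W M N u) ^ d) ^ mm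
            ≤ ((2:ℝ) ^ (2*d+2)) ^ mm := pow_le_pow_left₀ hfac_nonneg hfac mm
        have hfact_nonneg : (0:ℝ) ≤ ((mm+1).factorial : ℝ) := by positivity
        have hstep : ((Finset.Icc N K).card : ℝ) *
            (((2:ℝ) ^ (-(N:ℤ) - M)) ^ d *
              (∑ u ∈ Finset.range (K+1), (W M N u) ^ d) ^ mm)
            ≤ 2 * ((2:ℝ) ^ (2*d+2)) ^ mm := by
          rw [← mul_assoc]
          apply mul_le_mul hhead hprodle (pow_nonneg hfac_nonneg mm)
          norm_num
        calc ((mm+1).factorial : ℝ) * (((Finset.Icc N K).card : ℝ) *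
              (((2:ℝ) ^ (-(N:ℤ) - M)) ^ d *
                (∑ u ∈ Finset.range (K+1), (W M N u) ^ d) ^ mm))
            ≤ ((mm+1).factorial : ℝ) * (2 * ((2:ℝ) ^ (2*d+2)) ^ mm) :=
              mul_le_mul_of_nonneg_left hstep hfact_nonneg
          _ = ((mm+1).factorial : ℝ) * 2 * ((2:ℝ) ^ (2*d+2)) ^ mm := by ring


/-- The sum of indicators. -/
noncomputable def Sfun (d N M : ℕ) (x : EuclideanSpace ℝ (Fin d)) : ℝ :=
  ∑ k ∈ Finset.Icc N (2 ^ (N * d)), (cubeUnion d N M k).indicator (fun _ => (1 : ℝ)) x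

lemma Sfun_nonneg (d N M : ℕ) (x : EuclideanSpace ℝ (Fin d)) : 0 ≤ Sfun d N M x :=
  Finset.sum_nonneg fun k _ => Set.indicator_nonneg (fun _ _ => zero_le_one) x

lemma prod_indicator (d N M : ℕ) {n : ℕ} (f : Fin n → ℕ) (x : EuclideanSpace ℝ (Fin d)) :
    (∏ i, (cubeUnion d N M (f i)).indicator (fun _ => (1:ℝ)) x)
      = (⋂ i, cubeUnion d N M (f i)).indicator (fun _ => (1:ℝ)) x := by
  by_cases hx : x ∈ ⋂ i, cubeUnion d N M (f i)
  · rw [Set.indicator_of_mem hx]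
    refine Finset.prod_eq_one fun i _ => ?_
    rw [Set.indicator_of_mem (Set.mem_iInter.1 hx i)]
  · rw [Set.indicator_of_notMem hx]
    obtain ⟨i, hi⟩ : ∃ i, x ∉ cubeUnion d N M (f i) := by
      simpa [Set.mem_iInter] using hx
    exact Finset.prod_eq_zero (Finset.mem_univ i)
      (by rw [Set.indicator_of_notMem hi])

lemma Sfun_pow_expansion (d N M mm : ℕ) (x : EuclideanSpace ℝ (Fin d)) :
    (Sfun d N M x) ^ (mm+1)
      = ∑ f ∈ Fintype.piFinset (fun _ : Fin (mm+1) => Finset.Icc N (2 ^ (N * d))),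
          (⋂ i, cubeUnion d N M (f i)).indicator (fun _ => (1:ℝ)) x := by
  have h1 : (Sfun d N M x) ^ (mm+1) = ∏ _i : Fin (mm+1), Sfun d N M x := by
    rw [Finset.prod_const, Finset.card_univ, Fintype.card_fin]
  rw [h1]
  unfold Sfun
  rw [Finset.prod_univ_sum]
  exact Finset.sum_congr rfl fun f _ => prod_indicator d N M f x

lemma integrable_indicator_inter (d N M : ℕ) {mm : ℕ} (f : Fin (mm+1) → ℕ) (hf : N ≤ f 0) :
    Integrable ((⋂ i, cubeUnion d N M (f i)).indicator (fun _ => (1:ℝ))) volume := by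
  have hmeas : MeasurableSet (⋂ i, cubeUnion d N M (f i)) :=
    MeasurableSet.iInter fun i => measurableSet_cubeUnion d N M (f i)
  rw [integrable_indicator_iff hmeas]
  refine integrableOn_const (ne_of_lt ?_)
  calc volume (⋂ i, cubeUnion d N M (f i)) ≤ volume (cubeUnion d N M (f 0)) :=
        measure_mono (Set.iInter_subset _ 0)
    _ < ⊤ := volume_cubeUnion_lt_top d N M (f 0) hf

lemma integral_Sfun_pow (d N M mm : ℕ) :
    ∫ x : EuclideanSpace ℝ (Fin d), (Sfun d N M x) ^ (mm+1)
      = ∑ f ∈ Fintype.piFinset (fun _ : Fin (mm+1) => Finset.Icc N (2 ^ (N * d))),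
          (volume (⋂ i, cubeUnion d N M (f i))).toReal := by
  have hfun : (fun x : EuclideanSpace ℝ (Fin d) => (Sfun d N M x) ^ (mm+1))
      = fun x => ∑ f ∈ Fintype.piFinset (fun _ : Fin (mm+1) => Finset.Icc N (2 ^ (N * d))),
          (⋂ i, cubeUnion d N M (f i)).indicator (fun _ => (1:ℝ)) x :=
    funext fun x => Sfun_pow_expansion d N M mm x
  rw [hfun, integral_finset_sum]
  · refine Finset.sum_congr rfl fun f hf => ?_
    rw [integral_indicator_const (1:ℝ)
      (MeasurableSet.iInter fun i => measurableSet_cubeUnion d N M (f i))]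
    simp [Measure.real]
  · intro f hf
    have hf0 : N ≤ f 0 := by
      have := Fintype.mem_piFinset.1 hf 0
      exact (Finset.mem_Icc.1 this).1
    exact integrable_indicator_inter d N M f hf0

lemma integrable_Sfun_pow (d N M mm : ℕ) :
    Integrable (fun x : EuclideanSpace ℝ (Fin d) => (Sfun d N M x) ^ (mm+1)) volume := by
  have hfun : (fun x : EuclideanSpace ℝ (Fin d) => (Sfun d N M x) ^ (mm+1))
      = fun x => ∑ f ∈ Fintype.piFinset (fun _ : Fin (mm+1) => Finset.Icc N (2 ^ (N * d))),
          (⋂ i, cubeUnion d N M (f i)).indicator (fun _ => (1:ℝ)) x :=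
    funext fun x => Sfun_pow_expansion d N M mm x
  rw [hfun]
  apply integrable_finset_sum
  intro f hf
  have hf0 : N ≤ f 0 := by
    have := Fintype.mem_piFinset.1 hf 0
    exact (Finset.mem_Icc.1 this).1
  exact integrable_indicator_inter d N M f hf0

lemma Sfun_zero_or_one_le (d N M : ℕ) (x : EuclideanSpace ℝ (Fin d)) :
    Sfun d N M x = 0 ∨ 1 ≤ Sfun d N M x := by
  by_cases hx : ∀ k ∈ Finset.Icc N (2 ^ (N * d)),
      (cubeUnion d N M k).indicator (fun _ => (1:ℝ)) x = 0
  · left; exact Finset.sum_eq_zero hx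
  · right
    push_neg at hx
    obtain ⟨k, hk, hknz⟩ := hx
    have hval : (cubeUnion d N M k).indicator (fun _ => (1:ℝ)) x = 1 := by
      by_cases hxk : x ∈ cubeUnion d N M k
      · rw [Set.indicator_of_mem hxk]
      · exact absurd (Set.indicator_of_notMem hxk _) hknz
    calc (1:ℝ) = (cubeUnion d N M k).indicator (fun _ => (1:ℝ)) x := hval.symm
      _ ≤ Sfun d N M x := Finset.single_le_sum
          (fun j _ => Set.indicator_nonneg (fun _ _ => zero_le_one) x) hk

end CubeAux

open CubeAux in
/-- For `0 < q ≤ p < ∞`, the `L^p` norm of `(∑_{k=N}^{2^{Nd}} h_k)^{1/q}` is bounded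
by a constant depending only on `p, q, d, M` and not on `N`. -/
theorem cubeUnion_lp_bounded (p q : ℝ) (d M : ℕ) (hq : 0 < q) (hqp : q ≤ p) (hd : 1 ≤ d) :
    ∃ C : ℝ, ∀ N : ℕ, 1 ≤ N →
      (∫ x : EuclideanSpace ℝ (Fin d),
          ((∑ k ∈ Finset.Icc N (2 ^ (N * d)),
              (cubeUnion d N M k).indicator (fun _ => (1 : ℝ)) x) ^ (1 / q)) ^ p) ^ (1 / p)
        ≤ C := by
  classical
  have hp : 0 < p := lt_of_lt_of_le hq hqp
  have hr1 : (1:ℝ) ≤ p / q := (one_le_div hq).2 hqp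
  set mm : ℕ := ⌈p / q⌉₊ - 1 with hmm
  have hmm1 : mm + 1 = ⌈p / q⌉₊ := by
    have h1 : 1 ≤ ⌈p / q⌉₊ := Nat.one_le_ceil_iff.2 (by linarith)
    omega
  have hrn : p / q ≤ ((mm + 1 : ℕ) : ℝ) := by
    rw [hmm1]
    exact Nat.le_ceil _
  set B : ℝ := ((mm+1).factorial : ℝ) * 2 * ((2:ℝ) ^ (2*d+2)) ^ mm with hB
  have hBnonneg : (0:ℝ) ≤ B := by positivity
  refine ⟨(1 + B) ^ (1/p), ?_⟩
  intro N hN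
  -- pointwise bound
  have hpt : ∀ x : EuclideanSpace ℝ (Fin d),
      ((Sfun d N M x) ^ (1/q)) ^ p ≤ (Sfun d N M x) ^ (mm+1) := by
    intro x
    have h0 := Sfun_nonneg d N M x
    have hrw : ((Sfun d N M x) ^ (1/q)) ^ p = (Sfun d N M x) ^ (p/q) := by
      rw [← Real.rpow_mul h0]
      congr 1
      field_simp
    rw [hrw]
    rcases Sfun_zero_or_one_le d N M x with hz | h1
    · rw [hz, Real.zero_rpow (div_pos hp hq).ne']
      rw [zero_pow (Nat.succ_ne_zero mm)]
    · have h2 : (Sfun d N M x) ^ (p/q) ≤ (Sfun d N M x) ^ (((mm+1 : ℕ)):ℝ) :=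
        Real.rpow_le_rpow_of_exponent_le h1 hrn
      rwa [Real.rpow_natCast] at h2
  have hint := integrable_Sfun_pow d N M mm
  have hmono : (∫ x : EuclideanSpace ℝ (Fin d), ((Sfun d N M x) ^ (1/q)) ^ p)
      ≤ ∫ x : EuclideanSpace ℝ (Fin d), (Sfun d N M x) ^ (mm+1) := by
    apply integral_mono_of_nonneg
    · exact Filter.Eventually.of_forall fun x =>
        Real.rpow_nonneg (Real.rpow_nonneg (Sfun_nonneg d N M x) _) _
    · exact hint
    · exact Filter.Eventually.of_forall hpt
  have hsum : (∫ x : EuclideanSpace ℝ (Fin d), (Sfun d N M x) ^ (mm+1)) ≤ B := by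
    rw [integral_Sfun_pow d N M mm]
    exact main_sum_bound d N M mm hd
  have hnn : (0:ℝ) ≤ ∫ x : EuclideanSpace ℝ (Fin d), ((Sfun d N M x) ^ (1/q)) ^ p :=
    integral_nonneg fun x => Real.rpow_nonneg (Real.rpow_nonneg (Sfun_nonneg d N M x) _) _
  have hfinal : (∫ x : EuclideanSpace ℝ (Fin d), ((Sfun d N M x) ^ (1/q)) ^ p) ^ (1/p)
      ≤ (1 + B) ^ (1/p) := by
    apply Real.rpow_le_rpow hnn (by linarith) (by positivity)
  exact hfinal
end
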